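/- Let G be a finite simple graph whose connected components are C₁, C₂, …, C_n with n ≥ 2, where each component admits a 2-synchronous bondage set and the components are indexed so that b(C₁) ≤ b(C₂) ≤ … ≤ b(C_n). Then Sb₂(G) = min{ Sb₂(C₁), Sb₂(C₂), …, Sb₂(C_n), b(C₁) + b(C₂) }. -/

import Mathlib

/-- A finite set of vertices `D` is a dominating set of `G` if every vertex
is in `D` or adjacent to a vertex in `D`. -/
def SimpleGraph.IsDominatingSet {V : Type*} (G : SimpleGraph V) (D : Finset V) : Prop :=
  ∀ v : V, v ∈ D ∨ ∃ u ∈ D, G.Adj u v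

/-- The domination number of `G`: the minimum cardinality of a dominating set. -/
noncomputable def SimpleGraph.domNum {V : Type*} (G : SimpleGraph V) : ℕ :=
  sInf {n : ℕ | ∃ D : Finset V, G.IsDominatingSet D ∧ D.card = n}

/-- The `k`-synchronous bondage number of `G`: the minimum cardinality of a set of edges
whose deletion increases the domination number by exactly `k`.  (`Sb 1` is the classical
bondage number.) -/
noncomputable def SimpleGraph.synchBondage {V : Type*} (G : SimpleGraph V) (k : ℕ) : ℕ :=
  sInf {m : ℕ | ∃ E' : Finset (Sym2 V), ↑E' ⊆ G.edgeSet ∧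
    (G.deleteEdges ↑E').domNum = G.domNum + k ∧ E'.card = m}

namespace SimpleGraph

variable {W : Type*} [Fintype W] (H : SimpleGraph W)

lemma domNum_set_nonempty :
    {n : ℕ | ∃ D : Finset W, H.IsDominatingSet D ∧ D.card = n}.Nonempty :=
  ⟨_, Finset.univ, fun v => Or.inl (Finset.mem_univ v), rfl⟩

lemma exists_min_dominating : ∃ D : Finset W, H.IsDominatingSet D ∧ D.card = H.domNum :=
  Nat.sInf_mem (domNum_set_nonempty H)

lemma domNum_le_card {D : Finset W} (hD : H.IsDominatingSet D) : H.domNum ≤ D.card :=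
  Nat.sInf_le ⟨D, hD, rfl⟩

lemma IsDominatingSet.mono {H H' : SimpleGraph W} {D : Finset W} (h : H' ≤ H)
    (hD : H'.IsDominatingSet D) : H.IsDominatingSet D := by
  intro v
  rcases hD v with hv | ⟨u, hu, hadj⟩
  · exact Or.inl hv
  · exact Or.inr ⟨u, hu, h hadj⟩

lemma domNum_le_domNum_of_le {H H' : SimpleGraph W} (h : H' ≤ H) :
    H.domNum ≤ H'.domNum := by
  obtain ⟨D, hD, hcard⟩ := exists_min_dominating H'
  exact hcard ▸ domNum_le_card H (hD.mono h)

lemma domNum_le_domNum_deleteEdges (s : Set (Sym2 W)) :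
    H.domNum ≤ (H.deleteEdges s).domNum :=
  domNum_le_domNum_of_le (deleteEdges_le s)

lemma domNum_deleteEdges_single_le (e : Sym2 W) :
    (H.deleteEdges {e}).domNum ≤ H.domNum + 1 := by
  classical
  obtain ⟨D, hD, hcard⟩ := exists_min_dominating H
  induction e with
  | _ u v =>
    set D' : Finset W :=
      if u ∈ D then insert v D else if v ∈ D then insert u D else D with hD'
    have hsub : D ⊆ D' := by
      simp only [hD']
      split_ifs <;> first | exact Finset.subset_insert _ _ | exact Finset.Subset.refl _
    have hdom : (H.deleteEdges ({s(u,v)} : Set (Sym2 W))).IsDominatingSet D' := by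
      intro w
      by_cases hw : w ∈ D'
      · exact Or.inl hw
      · have hwD : w ∉ D := fun h => hw (hsub h)
        rcases hD w with h | ⟨x, hx, hadj⟩
        · exact absurd h hwD
        · refine Or.inr ⟨x, hsub hx, ?_⟩
          rw [deleteEdges_adj]
          refine ⟨hadj, ?_⟩
          intro hmem
          rw [Set.mem_singleton_iff, Sym2.eq_iff] at hmem
          rcases hmem with ⟨hxu, hwv⟩ | ⟨hxv, hwu⟩
          · -- x = u, w = v, so u ∈ D, hence v ∈ D'
            apply hw
            subst hxu hwv
            simp [hD', hx]
          · -- x = v, w = u, so v ∈ D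
            subst hxv hwu
            apply hw
            by_cases hu : w ∈ D
            · exact hsub hu
            · simp [hD', hu, hx]
    have hcard' : D'.card ≤ D.card + 1 := by
      simp only [hD']
      split_ifs <;> first | exact Finset.card_insert_le _ _ | exact Nat.le_succ _
    calc (H.deleteEdges {s(u,v)}).domNum ≤ D'.card := domNum_le_card _ hdom
      _ ≤ D.card + 1 := hcard'
      _ = H.domNum + 1 := by rw [hcard]

lemma exists_deleteEdges_domNum_eq (E' : Finset (Sym2 W)) :
    ∀ t, H.domNum ≤ t → t ≤ (H.deleteEdges ↑E').domNum →
    ∃ F : Finset (Sym2 W), F ⊆ E' ∧ (H.deleteEdges ↑F).domNum = t := by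
  classical
  induction E' using Finset.induction_on with
  | empty =>
    intro t h1 h2
    simp only [Finset.coe_empty, deleteEdges_empty] at h2
    exact ⟨∅, Finset.Subset.refl _, by
      simp only [Finset.coe_empty, deleteEdges_empty]; omega⟩
  | insert _ _ he ih =>
    rename_i e E'
    intro t h1 h2
    have hsplit : H.deleteEdges ↑(insert e E') = (H.deleteEdges ↑E').deleteEdges {e} := by
      rw [deleteEdges_deleteEdges, Finset.coe_insert, Set.insert_eq, Set.union_comm]
    by_cases ht : t ≤ (H.deleteEdges ↑E').domNum
    · obtain ⟨F, hF1, hF2⟩ := ih t h1 ht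
      exact ⟨F, hF1.trans (Finset.subset_insert _ _), hF2⟩
    · push_neg at ht
      have hle : (H.deleteEdges ↑(insert e E')).domNum ≤ (H.deleteEdges ↑E').domNum + 1 := by
        rw [hsplit]
        exact domNum_deleteEdges_single_le _ _
      refine ⟨insert e E', Finset.Subset.refl _, ?_⟩
      omega

lemma synchBondage_le (k : ℕ) {E' : Finset (Sym2 W)} (h1 : ↑E' ⊆ H.edgeSet)
    (h2 : (H.deleteEdges ↑E').domNum = H.domNum + k) : H.synchBondage k ≤ E'.card :=
  Nat.sInf_le ⟨E', h1, h2, rfl⟩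

lemma exists_synch_witness (k : ℕ)
    (h : ∃ E' : Finset (Sym2 W), ↑E' ⊆ H.edgeSet ∧
      (H.deleteEdges ↑E').domNum = H.domNum + k) :
    ∃ E' : Finset (Sym2 W), ↑E' ⊆ H.edgeSet ∧
      (H.deleteEdges ↑E').domNum = H.domNum + k ∧ E'.card = H.synchBondage k := by
  obtain ⟨E', h1, h2⟩ := h
  obtain ⟨F, hF1, hF2, hF3⟩ :=
    Nat.sInf_mem (s := {m : ℕ | ∃ E' : Finset (Sym2 W), ↑E' ⊆ H.edgeSet ∧
      (H.deleteEdges ↑E').domNum = H.domNum + k ∧ E'.card = m}) ⟨E'.card, E', h1, h2, rfl⟩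
  exact ⟨F, hF1, hF2, hF3⟩

/-- From a 2-synchronous bondage set we get a 1-synchronous bondage set. -/
lemma exists_one_of_two
    (h : ∃ E' : Finset (Sym2 W), ↑E' ⊆ H.edgeSet ∧
      (H.deleteEdges ↑E').domNum = H.domNum + 2) :
    ∃ F : Finset (Sym2 W), ↑F ⊆ H.edgeSet ∧
      (H.deleteEdges ↑F).domNum = H.domNum + 1 ∧ F.card = H.synchBondage 1 := by
  obtain ⟨E', h1, h2⟩ := h
  obtain ⟨F, hF1, hF2⟩ := exists_deleteEdges_domNum_eq H E' (H.domNum + 1)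
    (Nat.le_succ _) (by omega)
  exact exists_synch_witness H 1 ⟨F, fun x hx => h1 (hF1 hx), hF2⟩

section Partition

variable {V : Type*} [Fintype V] {n : ℕ} (supp : Fin n → Set V)

lemma domNum_sum_of_partition
    (hcov : ∀ v : V, ∃ i, v ∈ supp i)
    (hdisj : ∀ i j (v : V), v ∈ supp i → v ∈ supp j → i = j)
    (H : SimpleGraph V)
    (hedge : ∀ u v, H.Adj u v → ∀ i, u ∈ supp i → v ∈ supp i) :
    H.domNum = ∑ i, (H.induce (supp i)).domNum := by
  classical
  letI : ∀ i, Fintype ↥(supp i) := fun i => Set.Finite.fintype (Set.toFinite _)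
  apply le_antisymm
  · -- choose minimal dominating sets of the pieces and take their union
    choose D hD hcard using fun i => exists_min_dominating (H.induce (supp i))
    set U : Finset V :=
      Finset.univ.biUnion
        (fun i => (D i).map (Function.Embedding.subtype (· ∈ supp i))) with hU
    have hUdom : H.IsDominatingSet U := by
      intro v
      obtain ⟨i, hi⟩ := hcov v
      rcases hD i ⟨v, hi⟩ with hv | ⟨u, hu, hadj⟩
      · left
        rw [hU, Finset.mem_biUnion]
        exact ⟨i, Finset.mem_univ _, Finset.mem_map.2 ⟨⟨v, hi⟩, hv, rfl⟩⟩
      · right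
        refine ⟨↑u, ?_, ?_⟩
        · rw [hU, Finset.mem_biUnion]
          exact ⟨i, Finset.mem_univ _, Finset.mem_map.2 ⟨u, hu, rfl⟩⟩
        · exact hadj
    have hUcard : U.card ≤ ∑ i, (H.induce (supp i)).domNum := by
      rw [hU]
      refine le_trans (Finset.card_biUnion_le) ?_
      refine Finset.sum_le_sum fun i _ => ?_
      rw [Finset.card_map, hcard i]
    exact le_trans (domNum_le_card H hUdom) hUcard
  · -- split a minimal dominating set of H into the pieces
    obtain ⟨D, hD, hcard⟩ := exists_min_dominating H
    have hdomi : ∀ i, (H.induce (supp i)).IsDominatingSet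
        (D.subtype (· ∈ supp i)) := by
      intro i v
      rcases hD ↑v with hv | ⟨u, hu, hadj⟩
      · left
        simp [Finset.mem_subtype, hv]
      · right
        have hui : u ∈ supp i := hedge ↑v u hadj.symm i v.2
        refine ⟨⟨u, hui⟩, ?_, ?_⟩
        · simp [Finset.mem_subtype, hu]
        · simpa using hadj
    have hsum : ∑ i, (D.subtype (· ∈ supp i)).card = D.card := by
      have := Finset.card_eq_sum_card_fiberwise
        (s := D) (t := (Finset.univ : Finset (Fin n)))
        (f := fun v => Classical.choose (hcov v)) (fun v _ => Finset.mem_univ _)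
      rw [this]
      refine Finset.sum_congr rfl fun i _ => ?_
      rw [Finset.card_subtype]
      congr 1
      apply Finset.filter_congr
      intro v _
      constructor
      · intro hv
        exact hdisj _ _ v (Classical.choose_spec (hcov v)) hv
      · intro hv
        subst hv
        exact Classical.choose_spec (hcov v)
    calc ∑ i, (H.induce (supp i)).domNum
        ≤ ∑ i, (D.subtype (· ∈ supp i)).card :=
          Finset.sum_le_sum fun i _ => domNum_le_card _ (hdomi i)
      _ = D.card := hsum
      _ = H.domNum := hcard


lemma induce_deleteEdges (H : SimpleGraph V) (s : Set V) (E' : Set (Sym2 V)) :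
    (H.deleteEdges E').induce s
      = (H.induce s).deleteEdges (Sym2.map (Subtype.val : s → V) ⁻¹' E') := by
  ext a b
  simp only [comap_adj, Function.Embedding.coe_subtype, deleteEdges_adj,
    Set.mem_preimage, Sym2.map_pair_eq]

/-- The canonical embedding of edges of an induced subgraph into edges of the graph. -/
def edgeEmb (s : Set V) : Sym2 ↥s ↪ Sym2 V :=
  ⟨Sym2.map (Subtype.val : s → V), Sym2.map.injective Subtype.val_injective⟩

lemma lift_subset_edgeSet (H : SimpleGraph V) (s : Set V) (F : Finset (Sym2 ↥s))
    (hF : ↑F ⊆ (H.induce s).edgeSet) :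
    ↑(F.map (edgeEmb s)) ⊆ H.edgeSet := by
  intro e he
  simp only [Finset.coe_map, Set.mem_image, Finset.mem_coe] at he
  obtain ⟨e', he', rfl⟩ := he
  induction e' with
  | _ a b =>
    have := hF he'
    rw [mem_edgeSet] at this
    simp only [comap_adj, Function.Embedding.coe_subtype] at this
    simpa [edgeEmb, Sym2.map_pair_eq, mem_edgeSet] using this

lemma preimage_lift_self (s : Set V) (F : Finset (Sym2 ↥s)) :
    Sym2.map (Subtype.val : s → V) ⁻¹' (↑(F.map (edgeEmb s)) : Set (Sym2 V)) = ↑F := by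
  have : (↑(F.map (edgeEmb s)) : Set (Sym2 V))
      = Sym2.map (Subtype.val : s → V) '' ↑F := by
    simp [Finset.coe_map, edgeEmb]
  rw [this, Set.preimage_image_eq _ (Sym2.map.injective Subtype.val_injective)]

lemma mem_supp_of_mem_lift (s : Set V) (F : Finset (Sym2 ↥s)) (e : Sym2 V)
    (he : e ∈ F.map (edgeEmb s)) : ∀ w ∈ e, w ∈ s := by
  rw [Finset.mem_map] at he
  obtain ⟨e', _, rfl⟩ := he
  intro w hw
  induction e' with
  | _ a b =>
    simp only [edgeEmb, Function.Embedding.coeFn_mk, Sym2.map_pair_eq,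
      Sym2.mem_iff] at hw
    rcases hw with rfl | rfl
    · exact a.2
    · exact b.2

lemma preimage_lift_ne {i j : Fin n}
    (hdisj : ∀ i j (v : V), v ∈ supp i → v ∈ supp j → i = j)
    (hij : i ≠ j) (F : Finset (Sym2 ↥(supp i))) :
    Sym2.map (Subtype.val : (supp j) → V) ⁻¹'
      (↑(F.map (edgeEmb (supp i))) : Set (Sym2 V)) = ∅ := by
  ext e'
  simp only [Set.mem_preimage, Set.mem_empty_iff_false, iff_false, Finset.mem_coe]
  intro hmem
  induction e' with
  | _ a b =>
    have ha : (a : V) ∈ Sym2.map (Subtype.val : (supp j) → V) s(a, b) := by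
      simp [Sym2.map_pair_eq]
    have := mem_supp_of_mem_lift (supp i) F _ hmem ↑a ha
    exact hij (hdisj i j ↑a this a.2)

lemma disjoint_lifts {i j : Fin n}
    (hdisj : ∀ i j (v : V), v ∈ supp i → v ∈ supp j → i = j)
    (hij : i ≠ j) (F : Finset (Sym2 ↥(supp i))) (F' : Finset (Sym2 ↥(supp j))) :
    Disjoint (F.map (edgeEmb (supp i))) (F'.map (edgeEmb (supp j))) := by
  rw [Finset.disjoint_left]
  intro e he he'
  induction e with
  | _ a b =>
    have ha : a ∈ s(a, b) := by simp
    exact hij (hdisj i j a (mem_supp_of_mem_lift _ _ _ he a ha)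
      (mem_supp_of_mem_lift _ _ _ he' a ha))


lemma domNum_deleteEdges_lift_one
    (hcov : ∀ v : V, ∃ i, v ∈ supp i)
    (hdisj : ∀ i j (v : V), v ∈ supp i → v ∈ supp j → i = j)
    (H : SimpleGraph V)
    (hedge : ∀ u v, H.Adj u v → ∀ i, u ∈ supp i → v ∈ supp i)
    (i : Fin n) (F : Finset (Sym2 ↥(supp i))) (k : ℕ)
    (hF : ((H.induce (supp i)).deleteEdges ↑F).domNum = (H.induce (supp i)).domNum + k) :
    (H.deleteEdges ↑(F.map (edgeEmb (supp i)))).domNum = H.domNum + k := by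
  classical
  rw [domNum_sum_of_partition supp hcov hdisj _
      (fun u v h j hu => hedge u v (deleteEdges_le _ h) j hu),
    domNum_sum_of_partition supp hcov hdisj H hedge]
  have hterm : ∀ j, ((H.deleteEdges ↑(F.map (edgeEmb (supp i)))).induce (supp j)).domNum
      = (H.induce (supp j)).domNum + (if j = i then k else 0) := by
    intro j
    rw [induce_deleteEdges]
    by_cases hj : j = i
    · subst hj
      rw [preimage_lift_self, hF, if_pos rfl]
    · rw [preimage_lift_ne supp hdisj (fun h => hj h.symm), deleteEdges_empty, if_neg hj]
      omega
  calc ∑ j, ((H.deleteEdges ↑(F.map (edgeEmb (supp i)))).induce (supp j)).domNum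
      = ∑ j, ((H.induce (supp j)).domNum + (if j = i then k else 0)) :=
        Finset.sum_congr rfl fun j _ => hterm j
    _ = ∑ j, (H.induce (supp j)).domNum + ∑ j, (if j = i then k else 0) :=
        Finset.sum_add_distrib
    _ = ∑ j, (H.induce (supp j)).domNum + k := by
        rw [Finset.sum_ite_eq' Finset.univ i (fun _ => k), if_pos (Finset.mem_univ i)]

lemma domNum_deleteEdges_lift_two
    (hcov : ∀ v : V, ∃ i, v ∈ supp i)
    (hdisj : ∀ i j (v : V), v ∈ supp i → v ∈ supp j → i = j)
    (H : SimpleGraph V)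
    (hedge : ∀ u v, H.Adj u v → ∀ i, u ∈ supp i → v ∈ supp i)
    (i j : Fin n) (hij : i ≠ j) [DecidableEq (Sym2 V)]
    (F : Finset (Sym2 ↥(supp i))) (F' : Finset (Sym2 ↥(supp j)))
    (hF : ((H.induce (supp i)).deleteEdges ↑F).domNum = (H.induce (supp i)).domNum + 1)
    (hF' : ((H.induce (supp j)).deleteEdges ↑F').domNum = (H.induce (supp j)).domNum + 1) :
    (H.deleteEdges ↑(F.map (edgeEmb (supp i)) ∪ F'.map (edgeEmb (supp j)))).domNum
      = H.domNum + 2 := by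
  classical
  rw [domNum_sum_of_partition supp hcov hdisj _
      (fun u v h l hu => hedge u v (deleteEdges_le _ h) l hu),
    domNum_sum_of_partition supp hcov hdisj H hedge]
  set E' : Finset (Sym2 V) := F.map (edgeEmb (supp i)) ∪ F'.map (edgeEmb (supp j)) with hE'
  have hterm : ∀ l, ((H.deleteEdges ↑E').induce (supp l)).domNum
      = (H.induce (supp l)).domNum
        + ((if l = i then 1 else 0) + (if l = j then 1 else 0)) := by
    intro l
    rw [induce_deleteEdges]
    have hpre : Sym2.map (Subtype.val : (supp l) → V) ⁻¹' (↑E' : Set (Sym2 V))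
        = Sym2.map (Subtype.val : (supp l) → V) ⁻¹' (↑(F.map (edgeEmb (supp i))) : Set (Sym2 V))
          ∪ Sym2.map (Subtype.val : (supp l) → V) ⁻¹' (↑(F'.map (edgeEmb (supp j))) : Set (Sym2 V)) := by
      rw [hE', Finset.coe_union, Set.preimage_union]
    rw [hpre]
    by_cases hl : l = i
    · subst hl
      rw [preimage_lift_ne supp hdisj (fun h => hij h.symm),
        Set.union_empty, preimage_lift_self, hF, if_pos rfl, if_neg hij]
    · by_cases hl' : l = j
      · subst hl'
        rw [preimage_lift_ne supp hdisj hij,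
          Set.empty_union, preimage_lift_self, hF', if_neg hl, if_pos rfl]
      · rw [preimage_lift_ne supp hdisj (fun h => hl h.symm),
          preimage_lift_ne supp hdisj (fun h => hl' h.symm),
          Set.empty_union, deleteEdges_empty, if_neg hl, if_neg hl']
        omega
  calc ∑ l, ((H.deleteEdges ↑E').induce (supp l)).domNum
      = ∑ l, ((H.induce (supp l)).domNum
          + ((if l = i then 1 else 0) + (if l = j then 1 else 0))) :=
        Finset.sum_congr rfl fun l _ => hterm l
    _ = ∑ l, (H.induce (supp l)).domNum
          + (∑ l, (if l = i then 1 else 0) + ∑ l, (if l = j then 1 else 0)) := by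
        rw [Finset.sum_add_distrib, Finset.sum_add_distrib]
    _ = ∑ l, (H.induce (supp l)).domNum + 2 := by
        rw [Finset.sum_ite_eq' Finset.univ i (fun _ => 1),
          Finset.sum_ite_eq' Finset.univ j (fun _ => 1),
          if_pos (Finset.mem_univ i), if_pos (Finset.mem_univ j)]

lemma preimage_subset_edgeSet (H : SimpleGraph V) (s : Set V) (E' : Finset (Sym2 V))
    (hE : ↑E' ⊆ H.edgeSet) :
    ↑(E'.preimage (Sym2.map (Subtype.val : s → V))
        ((Sym2.map.injective Subtype.val_injective).injOn)) ⊆ (H.induce s).edgeSet := by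
  intro e
  induction e with
  | _ a b =>
    intro he
    rw [Finset.mem_coe, Finset.mem_preimage] at he
    have hmem := hE he
    rw [Sym2.map_pair_eq, mem_edgeSet] at hmem
    rw [mem_edgeSet]
    simpa using hmem

lemma lift_preimage_subset (s : Set V) (E' : Finset (Sym2 V)) :
    (E'.preimage (Sym2.map (Subtype.val : s → V))
        ((Sym2.map.injective Subtype.val_injective).injOn)).map (edgeEmb s) ⊆ E' := by
  intro e he
  rw [Finset.mem_map] at he
  obtain ⟨e', he', rfl⟩ := he
  exact Finset.mem_preimage.1 he'

end Partition

lemma sum_eq_two_cases {ι : Type*} [Fintype ι] (f : ι → ℕ) (h : ∑ i, f i = 2) :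
    (∃ i, f i = 2) ∨ (∃ i j, i ≠ j ∧ f i = 1 ∧ f j = 1) := by
  classical
  obtain ⟨i, -, hi⟩ := Finset.exists_ne_zero_of_sum_ne_zero
    (show ∑ i, f i ≠ 0 by omega)
  have hle : f i ≤ 2 :=
    h ▸ Finset.single_le_sum (fun _ _ => Nat.zero_le _) (Finset.mem_univ i)
  by_cases h2 : f i = 2
  · exact Or.inl ⟨i, h2⟩
  · have hfi : f i = 1 := by omega
    have herase : ∑ j ∈ Finset.univ.erase i, f j = 1 := by
      have := Finset.sum_erase_add Finset.univ f (Finset.mem_univ i)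
      omega
    obtain ⟨j, hj, hj0⟩ := Finset.exists_ne_zero_of_sum_ne_zero
      (show ∑ j ∈ Finset.univ.erase i, f j ≠ 0 by omega)
    have hj1 : f j ≤ 1 :=
      herase ▸ Finset.single_le_sum (fun _ _ => Nat.zero_le _) hj
    exact Or.inr ⟨i, j, (Finset.mem_erase.1 hj).1.symm, hfi, by omega⟩

end SimpleGraph


open SimpleGraph

/-- if the connected components `C₁, …, C_n` (`n ≥ 2`) of `G` each admit a
2-synchronous bondage set and are indexed so that `b(C₁) ≤ … ≤ b(C_n)`, then
`Sb₂(G) = min{Sb₂(C₁), …, Sb₂(C_n), b(C₁) + b(C₂)}`. -/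
theorem synchBondage_two_of_components {V : Type*} [Fintype V] (G : SimpleGraph V)
    (n : ℕ) (hn : 2 ≤ n) (C : Fin n → G.ConnectedComponent) (hC : Function.Bijective C)
    (hsorted : ∀ i j : Fin n, i ≤ j →
      (G.induce (C i).supp).synchBondage 1 ≤ (G.induce (C j).supp).synchBondage 1)
    (hadmit : ∀ i : Fin n, ∃ E' : Finset (Sym2 ↥(C i).supp),
      ↑E' ⊆ (G.induce (C i).supp).edgeSet ∧
      ((G.induce (C i).supp).deleteEdges ↑E').domNum = (G.induce (C i).supp).domNum + 2) :
    G.synchBondage 2 =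
      min (⨅ i : Fin n, (G.induce (C i).supp).synchBondage 2)
        ((G.induce (C ⟨0, by omega⟩).supp).synchBondage 1 +
          (G.induce (C ⟨1, by omega⟩).supp).synchBondage 1) := by
  classical
  letI : ∀ i : Fin n, Fintype ↥(C i).supp := fun i => Set.Finite.fintype (Set.toFinite _)
  haveI : Nonempty (Fin n) := ⟨⟨0, by omega⟩⟩
  set i0 : Fin n := ⟨0, by omega⟩ with hi0def
  set i1 : Fin n := ⟨1, by omega⟩ with hi1def
  have hi01 : i0 ≠ i1 := by
    simp [hi0def, hi1def, Fin.ext_iff]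
  have hcov : ∀ v : V, ∃ i, v ∈ (fun i => (C i).supp) i := by
    intro v
    obtain ⟨i, hi⟩ := hC.surjective (G.connectedComponentMk v)
    exact ⟨i, hi.symm⟩
  have hdisj : ∀ i j (v : V), v ∈ (fun i => (C i).supp) i →
      v ∈ (fun i => (C i).supp) j → i = j := by
    intro i j v hi hj
    rw [ConnectedComponent.mem_supp_iff] at hi hj
    exact hC.injective (hi.symm.trans hj)
  have hedgeG : ∀ u v, G.Adj u v → ∀ i, u ∈ (fun i => (C i).supp) i →
      v ∈ (fun i => (C i).supp) i := by
    intro u v h i hu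
    rw [ConnectedComponent.mem_supp_iff] at hu ⊢
    exact (ConnectedComponent.sound h.symm.reachable).trans hu
  have hbase : G.domNum = ∑ i, (G.induce (C i).supp).domNum :=
    domNum_sum_of_partition _ hcov hdisj G hedgeG
  -- lifting a k-synchronous set of a component to the whole graph
  have hlift1 : ∀ (i : Fin n) (F : Finset (Sym2 ↥(C i).supp)) (k : ℕ),
      ((G.induce (C i).supp).deleteEdges ↑F).domNum = (G.induce (C i).supp).domNum + k →
      (G.deleteEdges ↑(F.map (edgeEmb (C i).supp))).domNum = G.domNum + k :=
    fun i F k hF => domNum_deleteEdges_lift_one _ hcov hdisj G hedgeG i F k hF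
  -- upper bound: Sb₂(G) ≤ Sb₂(Cᵢ) for each i
  have hub1 : ∀ i : Fin n, G.synchBondage 2 ≤ (G.induce (C i).supp).synchBondage 2 := by
    intro i
    obtain ⟨F, hFe, hFd, hFc⟩ := exists_synch_witness (G.induce (C i).supp) 2 (hadmit i)
    have := synchBondage_le G 2 (lift_subset_edgeSet G _ F hFe) (hlift1 i F 2 hFd)
    rwa [Finset.card_map, hFc] at this
  -- upper bound: Sb₂(G) ≤ b(C₀) + b(C₁)
  have hub2 : G.synchBondage 2 ≤
      (G.induce (C i0).supp).synchBondage 1 + (G.induce (C i1).supp).synchBondage 1 := by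
    obtain ⟨F0, hF0e, hF0d, hF0c⟩ := exists_one_of_two (G.induce (C i0).supp) (hadmit i0)
    obtain ⟨F1, hF1e, hF1d, hF1c⟩ := exists_one_of_two (G.induce (C i1).supp) (hadmit i1)
    have hsub : ↑(F0.map (edgeEmb (C i0).supp) ∪ F1.map (edgeEmb (C i1).supp)) ⊆ G.edgeSet := by
      rw [Finset.coe_union]
      exact Set.union_subset (lift_subset_edgeSet G _ F0 hF0e) (lift_subset_edgeSet G _ F1 hF1e)
    have hdel := domNum_deleteEdges_lift_two (fun i => (C i).supp) hcov hdisj G hedgeG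
      i0 i1 hi01 F0 F1 hF0d hF1d
    have := synchBondage_le G 2 hsub hdel
    rwa [Finset.card_union_of_disjoint (disjoint_lifts _ hdisj hi01 F0 F1),
      Finset.card_map, Finset.card_map, hF0c, hF1c] at this
  -- a minimal 2-synchronous bondage set of G
  obtain ⟨W0, hW0e, hW0d, hW0c⟩ := exists_synch_witness (G.induce (C i0).supp) 2 (hadmit i0)
  obtain ⟨E', hE'e, hE'd, hE'c⟩ := exists_synch_witness G 2
    ⟨W0.map (edgeEmb (C i0).supp), lift_subset_edgeSet G _ W0 hW0e, hlift1 i0 W0 2 hW0d⟩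
  -- decompose E' into the components
  set P : ∀ i : Fin n, Finset (Sym2 ↥(C i).supp) := fun i =>
    E'.preimage (Sym2.map (Subtype.val : ((C i).supp : Set V) → V))
      ((Sym2.map.injective Subtype.val_injective).injOn) with hPdef
  have hPcoe : ∀ i, (↑(P i) : Set (Sym2 ↥(C i).supp))
      = Sym2.map (Subtype.val : ((C i).supp : Set V) → V) ⁻¹' ↑E' := by
    intro i
    rw [hPdef]
    exact Finset.coe_preimage _ _
  have hPedge : ∀ i, ↑(P i) ⊆ (G.induce (C i).supp).edgeSet := by
    intro i
    exact preimage_subset_edgeSet G _ E' hE'e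
  have hsum : ∑ i, ((G.induce (C i).supp).deleteEdges ↑(P i)).domNum
      = ∑ i, (G.induce (C i).supp).domNum + 2 := by
    have h1 : (G.deleteEdges ↑E').domNum
        = ∑ i, ((G.deleteEdges ↑E').induce (C i).supp).domNum :=
      domNum_sum_of_partition _ hcov hdisj _
        (fun u v h i hu => hedgeG u v (deleteEdges_le _ h) i hu)
    have h2 : ∀ i, ((G.deleteEdges ↑E').induce (C i).supp).domNum
        = ((G.induce (C i).supp).deleteEdges ↑(P i)).domNum := by
      intro i
      rw [induce_deleteEdges, hPcoe]
    calc ∑ i, ((G.induce (C i).supp).deleteEdges ↑(P i)).domNum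
        = ∑ i, ((G.deleteEdges ↑E').induce (C i).supp).domNum :=
          Finset.sum_congr rfl fun i _ => (h2 i).symm
      _ = (G.deleteEdges ↑E').domNum := h1.symm
      _ = G.domNum + 2 := hE'd
      _ = ∑ i, (G.induce (C i).supp).domNum + 2 := by rw [hbase]
  have hmono : ∀ i, (G.induce (C i).supp).domNum
      ≤ ((G.induce (C i).supp).deleteEdges ↑(P i)).domNum :=
    fun i => domNum_le_domNum_deleteEdges _ _
  set f : Fin n → ℕ := fun i =>
    ((G.induce (C i).supp).deleteEdges ↑(P i)).domNum - (G.induce (C i).supp).domNum with hfdef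
  have hsplit : ∀ i, ((G.induce (C i).supp).deleteEdges ↑(P i)).domNum
      = (G.induce (C i).supp).domNum + f i := by
    intro i
    have := hmono i
    simp only [hfdef]
    omega
  have hfsum : ∑ i, f i = 2 := by
    have : ∑ i, ((G.induce (C i).supp).domNum + f i)
        = ∑ i, (G.induce (C i).supp).domNum + 2 := by
      rw [← hsum]
      exact Finset.sum_congr rfl fun i _ => (hsplit i).symm
    rw [Finset.sum_add_distrib] at this
    omega
  -- lower bound
  have hlb : min (⨅ i : Fin n, (G.induce (C i).supp).synchBondage 2)
      ((G.induce (C i0).supp).synchBondage 1 + (G.induce (C i1).supp).synchBondage 1)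
      ≤ G.synchBondage 2 := by
    rw [← hE'c]
    rcases sum_eq_two_cases f hfsum with ⟨i, hfi⟩ | ⟨i, j, hij, hfi, hfj⟩
    · -- one component increases by 2
      have h2 : ((G.induce (C i).supp).deleteEdges ↑(P i)).domNum
          = (G.induce (C i).supp).domNum + 2 := by rw [hsplit i, hfi]
      have hSb : (G.induce (C i).supp).synchBondage 2 ≤ (P i).card :=
        synchBondage_le _ 2 (hPedge i) h2
      have hcard : (P i).card ≤ E'.card := by
        have hmap : (P i).map (edgeEmb (C i).supp) ⊆ E' := lift_preimage_subset _ E'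
        calc (P i).card = ((P i).map (edgeEmb (C i).supp)).card := (Finset.card_map _).symm
          _ ≤ E'.card := Finset.card_le_card hmap
      calc min _ _ ≤ ⨅ i : Fin n, (G.induce (C i).supp).synchBondage 2 := min_le_left _ _
        _ ≤ (G.induce (C i).supp).synchBondage 2 := ciInf_le (OrderBot.bddBelow _) i
        _ ≤ (P i).card := hSb
        _ ≤ E'.card := hcard
    · -- two components increase by 1 each
      have main : ∀ i j : Fin n, i < j → f i = 1 → f j = 1 →
          min (⨅ i : Fin n, (G.induce (C i).supp).synchBondage 2)
            ((G.induce (C i0).supp).synchBondage 1 + (G.induce (C i1).supp).synchBondage 1)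
            ≤ E'.card := by
        intro i j hij hfi hfj
        have h1i : ((G.induce (C i).supp).deleteEdges ↑(P i)).domNum
            = (G.induce (C i).supp).domNum + 1 := by rw [hsplit i, hfi]
        have h1j : ((G.induce (C j).supp).deleteEdges ↑(P j)).domNum
            = (G.induce (C j).supp).domNum + 1 := by rw [hsplit j, hfj]
        have hbi : (G.induce (C i).supp).synchBondage 1 ≤ (P i).card :=
          synchBondage_le _ 1 (hPedge i) h1i
        have hbj : (G.induce (C j).supp).synchBondage 1 ≤ (P j).card :=
          synchBondage_le _ 1 (hPedge j) h1j
        have h0i : (G.induce (C i0).supp).synchBondage 1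
            ≤ (G.induce (C i).supp).synchBondage 1 :=
          hsorted i0 i (by simp [hi0def, Fin.le_def])
        have h1j' : (G.induce (C i1).supp).synchBondage 1
            ≤ (G.induce (C j).supp).synchBondage 1 := by
          refine hsorted i1 j ?_
          have h1v : (1 : ℕ) ≤ (j : ℕ) := by
            have := hij
            rw [Fin.lt_def] at this
            omega
          rw [hi1def, Fin.le_def]
          simpa using h1v
        have hne : i ≠ j := Fin.ne_of_lt hij
        have hcards : (P i).card + (P j).card ≤ E'.card := by
          have hsub : (P i).map (edgeEmb (C i).supp) ∪ (P j).map (edgeEmb (C j).supp)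
              ⊆ E' :=
            Finset.union_subset (lift_preimage_subset _ E') (lift_preimage_subset _ E')
          calc (P i).card + (P j).card
              = ((P i).map (edgeEmb (C i).supp) ∪ (P j).map (edgeEmb (C j).supp)).card := by
                rw [Finset.card_union_of_disjoint (disjoint_lifts _ hdisj hne _ _),
                  Finset.card_map, Finset.card_map]
            _ ≤ E'.card := Finset.card_le_card hsub
        calc min _ _
            ≤ (G.induce (C i0).supp).synchBondage 1
              + (G.induce (C i1).supp).synchBondage 1 := min_le_right _ _
          _ ≤ (G.induce (C i).supp).synchBondage 1
              + (G.induce (C j).supp).synchBondage 1 := Nat.add_le_add h0i h1j'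
          _ ≤ (P i).card + (P j).card := Nat.add_le_add hbi hbj
          _ ≤ E'.card := hcards
      rcases hij.lt_or_gt with h | h
      · exact main i j h hfi hfj
      · exact main j i h hfj hfi
  exact le_antisymm (le_min (le_ciInf hub1) hub2) hlb
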